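/- Let a, b ≥ 1, let x be odd with 6 < x ≤ v/2 where v = a + b + 2, and suppose a ≥ 2. Then the multiset {1^a, 2^b, x} is realizable in K_v: there exists a Hamiltonian path on {0,...,v-1} whose multiset of edge-lengths is {1^a, 2^b, x}. -/

import Mathlib

def pathLen (v p q : ℕ) : ℕ := min (Nat.dist p q) (v - Nat.dist p q)

def lengths (v : ℕ) (h : List ℕ) : Multiset ℕ :=
  (List.zipWith (pathLen v) h h.tail : List ℕ)

lemma pathLen_comm (v p q : ℕ) : pathLen v p q = pathLen v q p := by
  simp [pathLen, Nat.dist_comm]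

lemma pathLen_small (v p q d : ℕ) (h : p + d = q ∨ q + d = p) (hv : 2*d ≤ v) :
    pathLen v p q = d := by
  simp [pathLen, Nat.dist]; omega

lemma lengths_nil (v : ℕ) : lengths v [] = 0 := rfl
lemma lengths_single (v p : ℕ) : lengths v [p] = 0 := rfl

lemma lengths_cons (v p q : ℕ) (l : List ℕ) (h : l.head? = some q) :
    lengths v (p :: l) = pathLen v p q ::ₘ lengths v l := by
  cases l with
  | nil => simp at h
  | cons c t => simp only [List.head?_cons, Option.some.injEq] at h; subst h; rfl

lemma lengths_append (v : ℕ) (l1 l2 : List ℕ) (p q : ℕ)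
    (h1 : l1.getLast? = some p) (h2 : l2.head? = some q) :
    lengths v (l1 ++ l2) = lengths v l1 + lengths v l2 + {pathLen v p q} := by
  induction l1 with
  | nil => simp at h1
  | cons c t ih =>
    cases t with
    | nil =>
      have hc : c = p := by simpa using h1
      cases l2 with
      | nil => simp at h2
      | cons d u =>
        have hd : d = q := by simpa using h2
        rw [List.singleton_append, lengths_cons v c d (d :: u) rfl, lengths_single,
          hc, hd, ← Multiset.singleton_add]
        abel
    | cons e t' =>
      have h1' : (e :: t').getLast? = some p := by
        rwa [List.getLast?_cons_cons] at h1
      rw [List.cons_append, lengths_cons v c e (((e :: t') ++ l2)) rfl,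
        lengths_cons v c e (e :: t') rfl, ih h1']
      rw [Multiset.cons_add, Multiset.cons_add]

lemma lengths_reverse (v : ℕ) (l : List ℕ) : lengths v l.reverse = lengths v l := by
  induction l with
  | nil => rfl
  | cons p t ih =>
    cases t with
    | nil => rfl
    | cons q u =>
      rw [List.reverse_cons, lengths_append v _ [p] q p (by simp) rfl,
        lengths_single, lengths_cons v p q (q::u) rfl, ih, pathLen_comm]
      rw [← Multiset.singleton_add]
      abel

def zig (y k : ℕ) : List ℕ :=
  match k with
  | 0 => [y]
  | 1 => [y, y+1]
  | (k+2) => y :: (zig (y+2) k ++ [y+1])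

lemma zig_head (y k : ℕ) : (zig y k).head? = some y := by
  match k with
  | 0 => rfl
  | 1 => rfl
  | (k+2) => rfl

lemma zig_ne_nil (y k : ℕ) : zig y k ≠ [] := by
  intro h; have := zig_head y k; rw [h] at this; simp at this

lemma zig_last (y k : ℕ) (hk : 1 ≤ k) : (zig y k).getLast? = some (y+1) := by
  match k with
  | 1 => rfl
  | (k+2) =>
    show ((y :: zig (y+2) k) ++ [y+1]).getLast? = some (y+1)
    exact List.getLast?_concat

lemma zig_perm (y k : ℕ) : (zig y k).Perm (List.range' y (k+1)) := by
  match k with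
  | 0 => rfl
  | 1 => rfl
  | (k+2) =>
    show (y :: (zig (y+2) k ++ [y+1])).Perm _
    have h1 : (zig (y+2) k ++ [y+1]).Perm ((y+1) :: List.range' (y+2) (k+1)) :=
      (List.perm_append_singleton _ _).trans ((zig_perm (y+2) k).cons _)
    have h2 : List.range' y (k+2+1) = y :: (y+1) :: List.range' (y+2) (k+1) := by
      rw [List.range'_succ, List.range'_succ]
    rw [h2]
    exact h1.cons y

lemma zig_lengths (v y k : ℕ) (hv : 4 ≤ v) :
    lengths v (zig y k) = Multiset.replicate (k-1) 2 + Multiset.replicate (min k 1) 1 := by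
  match k with
  | 0 => simp [zig, lengths_single]
  | 1 =>
    show lengths v [y, y+1] = _
    rw [lengths_cons v y (y+1) [y+1] rfl, lengths_single,
      pathLen_small v y (y+1) 1 (by omega) (by omega)]
    simp
  | (k+2) =>
    show lengths v (y :: (zig (y+2) k ++ [y+1])) = _
    have hhead : (zig (y+2) k ++ [y+1]).head? = some (y+2) := by
      rw [List.head?_append_of_ne_nil _ (zig_ne_nil _ _), zig_head]
    rw [lengths_cons v y (y+2) _ hhead]
    cases k with
    | zero =>
      show (pathLen v y (y+2)) ::ₘ lengths v ([y+2] ++ [y+1]) = _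
      rw [lengths_append v [y+2] [y+1] (y+2) (y+1) rfl rfl, lengths_single, lengths_single,
        pathLen_small v y (y+2) 2 (by omega) (by omega),
        pathLen_small v (y+2) (y+1) 1 (by omega) (by omega)]
      decide
    | succ k' =>
      rw [lengths_append v _ [y+1] (y+2+1) (y+1) (zig_last (y+2) (k'+1) (by omega)) rfl,
        zig_lengths v (y+2) (k'+1) hv,
        pathLen_small v y (y+2) 2 (by omega) (by omega),
        pathLen_small v (y+2+1) (y+1) 2 (by omega) (by omega)]
      have h1 : min (k'+1) 1 = 1 := by omega
      have h2 : min (k'+1+2) 1 = 1 := by omega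
      have h3 : Multiset.replicate 2 (2:ℕ) = {2} + {2} := by decide
      rw [h1, h2, lengths_single, show k'+1+2-1 = (k'+1-1) + 2 by omega,
        Multiset.replicate_add, h3, ← Multiset.singleton_add]
      abel

def Block (y r k : ℕ) : List ℕ := List.range' y r ++ zig (y+r) k

lemma Block_head (y r k : ℕ) : (Block y r k).head? = some y := by
  cases r with
  | zero => simp [Block, zig_head]
  | succ r' => simp [Block, List.range'_succ]

lemma Block_ne_nil (y r k : ℕ) : Block y r k ≠ [] := by
  intro h; have := Block_head y r k; rw [h] at this; simp at this

lemma Block_perm (y r k : ℕ) : (Block y r k).Perm (List.range' y (r+k+1)) := by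
  have h := List.range'_append (s := y) (m := r) (n := k+1) (step := 1)
  simp only [one_mul] at h
  rw [show r+k+1 = r+(k+1) by omega, ← h]
  exact (zig_perm (y+r) k).append_left _

lemma range'_lengths (v y r : ℕ) (hv : 2 ≤ v) :
    lengths v (List.range' y r) = Multiset.replicate (r-1) 1 := by
  induction r generalizing y with
  | zero => rfl
  | succ r' ih =>
    cases r' with
    | zero => simp [lengths_single]
    | succ r'' =>
      rw [List.range'_succ, lengths_cons v y (y+1) _ (by rw [List.range'_succ]; rfl),
        ih (y+1), pathLen_small v y (y+1) 1 (by omega) (by omega)]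
      simp [Multiset.replicate_succ]

lemma Block_lengths (v y r k : ℕ) (hv : 4 ≤ v) :
    lengths v (Block y r k) =
      Multiset.replicate (k-1) 2 + Multiset.replicate (r - 1 + min k 1 + min r 1) 1 := by
  cases r with
  | zero =>
    simp only [Block, List.range'_zero, List.nil_append, Nat.add_zero]
    rw [zig_lengths v y k hv]
    simp
  | succ r' =>
    have hlast : (List.range' y (r'+1)).getLast? = some (y + r') := by
      have : List.range' y (r'+1) ≠ [] := by simp
      simp only [List.getLast?_eq_getLast this, List.getLast_range', Option.some.injEq]
      omega
    rw [Block, lengths_append v _ _ (y+r') (y+(r'+1)) hlast (zig_head _ _),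
      range'_lengths v y (r'+1) (by omega), zig_lengths v _ k hv,
      pathLen_small v (y+r') (y+(r'+1)) 1 (by omega) (by omega)]
    have : min (r'+1) 1 = 1 := by omega
    rw [this]
    simp only [Nat.add_sub_cancel]
    rw [show r' + min k 1 + 1 = (r' + min k 1) + 1 from rfl,
      Multiset.replicate_succ, ← Multiset.singleton_add, Multiset.replicate_add]
    abel

def IsHamPath (v : ℕ) (h : List ℕ) : Prop :=
  h.Nodup ∧ h.length = v ∧ ∀ p ∈ h, p < v

theorem stmt_13 (a b x v : ℕ) (ha : 1 ≤ a) (hb : 1 ≤ b) (hxodd : Odd x)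
    (h6 : 6 < x) (hx2 : x ≤ v / 2) (hv : v = a + b + 2) (ha2 : 2 ≤ a) :
    ∃ h : List ℕ, IsHamPath v h ∧
      lengths v h = Multiset.replicate a 1 + Multiset.replicate b 2 + {x} := by
  have hvx : 2 * x ≤ v := by omega
  obtain ⟨b1, b2, k1, r1, k2, r2, H1, H2, H3, H4, H5⟩ :
      ∃ b1 b2 k1 r1 k2 r2 : ℕ,
        b1 + b2 = b ∧ k1 = b1 + 1 ∧ r1 + k1 + 1 = x ∧ r2 + k2 + 1 = v - x ∧
        (b2 = 0 ∧ k2 = 0 ∨ 1 ≤ b2 ∧ k2 = b2 + 1 ∧ b2 ≤ v - x - 2) := by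
    by_cases hbx : b ≤ x - 2
    · exact ⟨b, 0, b + 1, x - 2 - b, 0, v - x - 1, by omega⟩
    · exact ⟨x - 2, b - (x - 2), x - 1, 0, b - (x - 2) + 1, v - x - 2 - (b - (x - 2)),
        by omega⟩
  refine ⟨(Block x r2 k2).reverse ++ Block 0 r1 k1, ?_, ?_⟩
  · -- IsHamPath
    have hperm : ((Block x r2 k2).reverse ++ Block 0 r1 k1).Perm (List.range' 0 v) := by
      have p1 : ((Block x r2 k2).reverse ++ Block 0 r1 k1).Perm
          (List.range' x (v-x) ++ List.range' 0 x) := by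
        refine List.Perm.append ?_ ?_
        · rw [← H4]; exact (List.reverse_perm _).trans (Block_perm x r2 k2)
        · rw [← H3]; exact Block_perm 0 r1 k1
      refine p1.trans (List.perm_append_comm.trans ?_)
      have h := List.range'_append (s := 0) (m := x) (n := v-x) (step := 1)
      simp only [one_mul, Nat.zero_add] at h
      rw [h, show x + (v - x) = v by omega]
    refine ⟨hperm.symm.nodup (List.nodup_range' (s := 0) (n := v)), ?_, ?_⟩
    · rw [hperm.length_eq, List.length_range']
    · intro p hp
      have := (hperm.mem_iff).mp hp
      rw [List.mem_range'_1] at this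
      omega
  · -- lengths
    have hLlast : ((Block x r2 k2).reverse).getLast? = some x := by
      rw [List.getLast?_reverse, Block_head]
    rw [lengths_append v _ _ x 0 hLlast (Block_head 0 r1 k1), lengths_reverse,
      Block_lengths v x r2 k2 (by omega), Block_lengths v 0 r1 k1 (by omega),
      pathLen_small v x 0 x (by omega) hvx]
    have ea : Multiset.replicate a (1:ℕ) =
        Multiset.replicate (r2 - 1 + min k2 1 + min r2 1) 1 +
          Multiset.replicate (r1 - 1 + min k1 1 + min r1 1) 1 := by
      rw [← Multiset.replicate_add]
      congr 1
      omega
    have eb : Multiset.replicate b (2:ℕ) =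
        Multiset.replicate (k2 - 1) 2 + Multiset.replicate (k1 - 1) 2 := by
      rw [← Multiset.replicate_add]
      congr 1
      omega
    rw [ea, eb]
    abel
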